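/- Let a > 0 and let x : (-a, a) → ℂ be C¹ with x' absolutely continuous on compact subintervals, and suppose x ∈ L²(-a, a), Lx ∈ L²(-a, a), lim_{t→±a}(1 - t²/a²) x'(t) = 0, and x extends continuously to [-a, a]. Then ∫_{-a}^{a} (Lx)(ξ) conj(x(ξ)) dξ = ∫_{-a}^{a} (1 - ξ²/a²) |x'(ξ)|² dξ + ∫_{-a}^{a} ξ² |x(ξ)|² dξ; in particular ⟨Lx, x⟩ ≥ 0. -/

import Mathlib

open Set Filter MeasureTheory

private lemma aux_restr {I : Set ℝ} {c d : ℝ} {E : Type*} [NormedAddCommGroup E]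
    [NormedSpace ℝ E] (f : ℝ → E) (hcd : c ≤ d) (hsub : Ioc c d ⊆ I) :
    ∫ t in Ioc c d, f t ∂(volume.restrict I) = ∫ t in c..d, f t := by
  rw [intervalIntegral.integral_of_le hcd, Measure.restrict_restrict measurableSet_Ioc,
    inter_eq_self_of_subset_left hsub]

theorem stmt19 (a : ℝ) (ha : 0 < a) (x x' q : ℝ → ℂ)
    (hx : ∀ t ∈ Ioo (-a) a, HasDerivAt x (x' t) t)
    (hq : ∀ t ∈ Ioo (-a) a,
      HasDerivAt (fun s : ℝ => ((1 : ℂ) - (s : ℂ)^2 / (a : ℂ)^2) * x' s) (q t) t)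
    (Lx : ℝ → ℂ)
    (hLx : ∀ t ∈ Ioo (-a) a, Lx t = -(q t) + (t : ℂ)^2 * x t)
    (hxL2 : MemLp x 2 (volume.restrict (Ioo (-a) a)))
    (hLxL2 : MemLp Lx 2 (volume.restrict (Ioo (-a) a)))
    (hlim_left :
      Tendsto (fun t : ℝ => ((1 : ℂ) - (t : ℂ)^2 / (a : ℂ)^2) * x' t)
        (nhdsWithin (-a) (Ioo (-a) a)) (nhds 0))
    (hlim_right :
      Tendsto (fun t : ℝ => ((1 : ℂ) - (t : ℂ)^2 / (a : ℂ)^2) * x' t)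
        (nhdsWithin a (Ioo (-a) a)) (nhds 0))
    (hcont : ∃ xc : ℝ → ℂ, ContinuousOn xc (Icc (-a) a) ∧ EqOn x xc (Ioo (-a) a)) :
    (∫ t in (-a)..a, Lx t * starRingEnd ℂ (x t)) =
      ((∫ t in (-a)..a, (1 - t^2/a^2) * ‖x' t‖^2) +
        ∫ t in (-a)..a, t^2 * ‖x t‖^2 : ℝ) ∧
    0 ≤ (∫ t in (-a)..a, Lx t * starRingEnd ℂ (x t)).re := by
  obtain ⟨xc, hxc_cont, hxc_eq⟩ := hcont
  set I : Set ℝ := Ioo (-a) a with hIdef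
  set μ : Measure ℝ := volume.restrict I with hμdef
  -- notation
  set p : ℝ → ℂ := fun s : ℝ => ((1 : ℂ) - (s : ℂ)^2 / (a : ℂ)^2) with hpdef
  set g : ℝ → ℂ := fun t => q t * starRingEnd ℂ (x t) with hgdef
  set B : ℝ → ℂ := fun t => (t : ℂ)^2 * x t * starRingEnd ℂ (x t) with hBdef
  set P : ℝ → ℂ := fun t => (p t * x' t) * starRingEnd ℂ (x' t) with hPdef
  set h : ℝ → ℝ := fun t => (1 - t^2/a^2) * ‖x' t‖^2 with hhdef
  set k : ℝ → ℝ := fun t => t^2 * ‖x t‖^2 with hkdef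
  set F : ℝ → ℂ := fun t => (p t * x' t) * starRingEnd ℂ (x t) with hFdef
  have hpc : ∀ t : ℝ, p t = ((1 - t^2/a^2 : ℝ) : ℂ) := by
    intro t; simp only [hpdef]; push_cast; ring
  have hp_pos : ∀ t ∈ I, 0 < 1 - t^2/a^2 := by
    intro t ht
    have h1 : t^2 < a^2 := by nlinarith [ht.1, ht.2]
    have h2 : t^2/a^2 < 1 := (div_lt_one (by positivity)).mpr h1
    linarith
  have hPco : ∀ t : ℝ, P t = ((h t : ℝ) : ℂ) := by
    intro t
    simp only [hPdef, hhdef, hpc t, mul_assoc, Complex.mul_conj']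
    push_cast; ring
  have hBco : ∀ t : ℝ, B t = ((k t : ℝ) : ℂ) := by
    intro t
    simp only [hBdef, hkdef, mul_assoc, Complex.mul_conj']
    push_cast; ring
  -- continuity facts
  have hx'cont : ContinuousOn x' I := by
    have h1 : ContinuousOn (fun s => p s * x' s) I := fun t ht =>
      ((hq t ht).continuousAt).continuousWithinAt
    have h2 : ContinuousOn p I := by
      apply Continuous.continuousOn; fun_prop
    have hp_ne : ∀ t ∈ I, p t ≠ 0 := fun t ht => by
      rw [hpc t]
      exact_mod_cast (hp_pos t ht).ne'
    exact (ContinuousOn.div h1 h2 hp_ne).congr fun t ht => by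
      simp only [Pi.div_apply, mul_div_cancel_left₀ _ (hp_ne t ht)]
  have hhcont : ContinuousOn h I := by
    apply ContinuousOn.mul
    · apply Continuous.continuousOn; fun_prop
    · exact (hx'cont.norm).pow 2
  have hPcont : ContinuousOn P I := by
    have := Complex.continuous_ofReal.comp_continuousOn hhcont
    exact this.congr fun t _ => hPco t
  -- integrability on I
  have hxm : AEStronglyMeasurable x μ := hxL2.1
  have hconj : MemLp (fun t => starRingEnd ℂ (x t)) 2 μ := by
    refine hxL2.of_le (continuous_star.comp_aestronglyMeasurable hxm) ?_
    filter_upwards with t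
    simp
  have hA : Integrable (fun t => Lx t * starRingEnd ℂ (x t)) μ := by
    have h12 : (1:ENNReal)/1 = 1/2 + 1/2 := by
      simp [one_div, ENNReal.inv_two_add_inv_two]
    have := memLp_one_iff_integrable.mp (MemLp.smul (r := 1) hconj hLxL2)
    exact this.congr (by filter_upwards with t; simp [Pi.smul_apply, smul_eq_mul])
  have hnormsq : Integrable (fun t => ‖x t‖^2) μ := hxL2.norm.integrable_sq
  have hkI : Integrable k μ := by
    refine Integrable.mono' (hnormsq.const_mul (a^2)) ?_ ?_
    · have : AEStronglyMeasurable (fun t : ℝ => t^2 * (‖x t‖ * ‖x t‖)) μ :=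
        (continuous_pow 2).aestronglyMeasurable.mul (hxm.norm.mul hxm.norm)
      refine this.congr ?_
      filter_upwards with t
      show t^2 * (‖x t‖ * ‖x t‖) = k t
      simp only [hkdef]; ring
    · filter_upwards [ae_restrict_mem measurableSet_Ioo] with t ht
      have h1 : t^2 ≤ a^2 := by nlinarith [ht.1, ht.2]
      have h2 : (0:ℝ) ≤ t^2 * ‖x t‖^2 := by positivity
      rw [hkdef, Real.norm_eq_abs, abs_of_nonneg h2]
      nlinarith [sq_nonneg ‖x t‖]
  have hBI : Integrable B μ := by
    have := hkI.ofReal (𝕜 := ℂ)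
    exact this.congr (by filter_upwards with t using (hBco t).symm)
  have hgI : Integrable g μ := by
    refine (hBI.sub hA).congr ?_
    filter_upwards [ae_restrict_mem measurableSet_Ioo] with t ht
    show B t - Lx t * (starRingEnd ℂ) (x t) = g t
    simp only [hgdef, hBdef, hLx t ht]; ring
  -- the exhausting sequence
  set c : ℕ → ℝ := fun n => -a + a/((n:ℝ)+1) with hcdef
  set d : ℕ → ℝ := fun n => a - a/((n:ℝ)+1) with hddef
  have he_pos : ∀ n : ℕ, 0 < a/((n:ℝ)+1) := fun n => div_pos ha (by positivity)
  have he_le : ∀ n : ℕ, a/((n:ℝ)+1) ≤ a := fun n =>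
    div_le_self ha.le (by have := Nat.cast_nonneg (α := ℝ) n; linarith)
  have hc_mem : ∀ n, c n ∈ I := fun n =>
    ⟨by have := he_pos n; simp only [hcdef]; linarith,
     by have := he_le n; simp only [hcdef]; linarith⟩
  have hd_mem : ∀ n, d n ∈ I := fun n =>
    ⟨by have := he_le n; simp only [hddef]; linarith,
     by have := he_pos n; simp only [hddef]; linarith⟩
  have hcd : ∀ n, c n ≤ d n := fun n => by
    have := he_le n; simp only [hcdef, hddef]; linarith
  have hsub : ∀ n, Icc (c n) (d n) ⊆ I := fun n t ht =>
    ⟨lt_of_lt_of_le (hc_mem n).1 ht.1, lt_of_le_of_lt ht.2 (hd_mem n).2⟩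
  have hIocsub : ∀ n, Ioc (c n) (d n) ⊆ I := fun n =>
    Ioc_subset_Icc_self.trans (hsub n)
  have he0 : Tendsto (fun n : ℕ => a/((n:ℝ)+1)) atTop (nhds 0) :=
    Tendsto.div_atTop tendsto_const_nhds
      (tendsto_atTop_add_const_right atTop 1 tendsto_natCast_atTop_atTop)
  have hctend : Tendsto c atTop (nhds (-a)) := by
    have h0 := Tendsto.const_add (-a : ℝ) he0
    simpa using h0
  have hdtend : Tendsto d atTop (nhds a) := by
    have h0 := Tendsto.const_sub (a : ℝ) he0
    simpa using h0
  have hcover : AECover μ atTop (fun n => Ioc (c n) (d n)) :=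
    aecover_Ioo_of_Ioc hctend hdtend
  -- FTC on each [c n, d n]
  have hIdn : ∀ n, (∫ t in c n..d n, g t) + ((∫ t in c n..d n, h t : ℝ) : ℂ)
      = F (d n) - F (c n) := by
    intro n
    have hderiv : ∀ t ∈ uIcc (c n) (d n), HasDerivAt F (g t + P t) t := by
      intro t ht
      rw [uIcc_of_le (hcd n)] at ht
      have htI : t ∈ I := hsub n ht
      have h1 := (hq t htI).mul ((hx t htI).star)
      simpa only [hFdef, hgdef, hPdef, starRingEnd_apply, Pi.mul_def] using h1
    have hgIOn : IntegrableOn g I volume := hgI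
    have hgInt : IntervalIntegrable g volume (c n) (d n) :=
      (intervalIntegrable_iff_integrableOn_Ioc_of_le (hcd n)).mpr
        (hgIOn.mono_set (hIocsub n))
    have hPInt : IntervalIntegrable P volume (c n) (d n) :=
      (hPcont.mono (hsub n)).intervalIntegrable_of_Icc (hcd n)
    have hFTC := intervalIntegral.integral_eq_sub_of_hasDerivAt hderiv (hgInt.add hPInt)
    rw [intervalIntegral.integral_add hgInt hPInt] at hFTC
    have hPh : ∫ t in c n..d n, P t = ((∫ t in c n..d n, h t : ℝ) : ℂ) := by
      rw [← intervalIntegral.integral_ofReal]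
      exact intervalIntegral.integral_congr fun t _ => hPco t
    rw [hPh] at hFTC
    exact hFTC
  -- boundary limits
  have hxa : ∀ b ∈ Icc (-a) a, Tendsto x (nhdsWithin b I) (nhds (xc b)) := by
    intro b hb
    have h1 : Tendsto xc (nhdsWithin b I) (nhds (xc b)) :=
      (hxc_cont b hb).mono_left (nhdsWithin_mono _ Ioo_subset_Icc_self)
    exact h1.congr' (eventually_of_mem self_mem_nhdsWithin fun t ht => (hxc_eq ht).symm)
  have hFright : Tendsto F (nhdsWithin a I) (nhds 0) := by
    have h2 : Tendsto (fun t => starRingEnd ℂ (x t)) (nhdsWithin a I)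
        (nhds (starRingEnd ℂ (xc a))) :=
      (continuous_star.tendsto _).comp (hxa a ⟨by linarith, le_refl a⟩)
    have := hlim_right.mul h2
    simpa [hFdef] using this
  have hFleft : Tendsto F (nhdsWithin (-a) I) (nhds 0) := by
    have h2 : Tendsto (fun t => starRingEnd ℂ (x t)) (nhdsWithin (-a) I)
        (nhds (starRingEnd ℂ (xc (-a)))) :=
      (continuous_star.tendsto _).comp (hxa (-a) ⟨le_refl _, by linarith⟩)
    have := hlim_left.mul h2
    simpa [hFdef] using this
  have hd_in : Tendsto d atTop (nhdsWithin a I) :=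
    tendsto_nhdsWithin_iff.mpr ⟨hdtend, Eventually.of_forall hd_mem⟩
  have hc_in : Tendsto c atTop (nhdsWithin (-a) I) :=
    tendsto_nhdsWithin_iff.mpr ⟨hctend, Eventually.of_forall hc_mem⟩
  have hFd : Tendsto (fun n => F (d n)) atTop (nhds 0) := hFright.comp hd_in
  have hFc : Tendsto (fun n => F (c n)) atTop (nhds 0) := hFleft.comp hc_in
  -- convergence of ∫ g over c n .. d n
  have hgTend : Tendsto (fun n => ∫ t in c n..d n, g t) atTop (nhds (∫ t, g t ∂μ)) := by
    have := hcover.integral_tendsto_of_countably_generated hgI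
    exact this.congr fun n => aux_restr g (hcd n) (hIocsub n)
  -- convergence and integrability of h
  have hhseq : Tendsto (fun n => ∫ t in c n..d n, h t) atTop
      (nhds (((0:ℂ) - 0 - ∫ t, g t ∂μ).re)) := by
    have hre : ∀ n, ∫ t in c n..d n, h t
        = (F (d n) - F (c n) - ∫ t in c n..d n, g t).re := by
      intro n
      have := hIdn n
      have h2 : F (d n) - F (c n) - ∫ t in c n..d n, g t
          = ((∫ t in c n..d n, h t : ℝ) : ℂ) := by rw [← this]; ring
      rw [h2, Complex.ofReal_re]
    have htendc : Tendsto (fun n => F (d n) - F (c n) - ∫ t in c n..d n, g t) atTop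
        (nhds ((0:ℂ) - 0 - ∫ t, g t ∂μ)) := (hFd.sub hFc).sub hgTend
    exact Tendsto.congr (fun n => (hre n).symm)
      ((Complex.continuous_re.tendsto _).comp htendc)
  have hhfi : ∀ n, IntegrableOn h (Ioc (c n) (d n)) μ := by
    intro n
    rw [IntegrableOn, hμdef, Measure.restrict_restrict measurableSet_Ioc,
      inter_eq_self_of_subset_left (hIocsub n)]
    exact ((hhcont.mono (hsub n)).integrableOn_Icc).mono_set Ioc_subset_Icc_self
  have hhseq' : Tendsto (fun n => ∫ t in Ioc (c n) (d n), h t ∂μ) atTop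
      (nhds (((0:ℂ) - 0 - ∫ t, g t ∂μ).re)) := by
    refine hhseq.congr fun n => (aux_restr h (hcd n) (hIocsub n)).symm
  have hhnn : ∀ᵐ t ∂μ, 0 ≤ h t := by
    filter_upwards [ae_restrict_mem measurableSet_Ioo] with t ht
    have := hp_pos t ht
    have : (0:ℝ) ≤ 1 - t^2/a^2 := this.le
    rw [hhdef]
    positivity
  have hhI : Integrable h μ :=
    hcover.integrable_of_integral_tendsto_of_nonneg_ae _ hhfi hhnn hhseq'
  have hhTend : Tendsto (fun n => ∫ t in c n..d n, h t) atTop (nhds (∫ t, h t ∂μ)) := by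
    have := hcover.integral_tendsto_of_countably_generated hhI
    exact this.congr fun n => aux_restr h (hcd n) (hIocsub n)
  -- key identity
  have H0 : (∫ t, g t ∂μ) + ((∫ t, h t ∂μ : ℝ) : ℂ) = 0 := by
    have h1 : Tendsto (fun n => (∫ t in c n..d n, g t) + ((∫ t in c n..d n, h t : ℝ) : ℂ))
        atTop (nhds ((∫ t, g t ∂μ) + ((∫ t, h t ∂μ : ℝ) : ℂ))) :=
      hgTend.add ((Complex.continuous_ofReal.tendsto _).comp hhTend)
    have h2 : Tendsto (fun n => (∫ t in c n..d n, g t) + ((∫ t in c n..d n, h t : ℝ) : ℂ))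
        atTop (nhds ((0:ℂ) - 0)) :=
      Tendsto.congr (fun n => (hIdn n).symm) (hFd.sub hFc)
    have := tendsto_nhds_unique h1 h2
    simpa using this
  have hgval : (∫ t, g t ∂μ) = -((∫ t, h t ∂μ : ℝ) : ℂ) := by
    linear_combination H0
  -- convert interval integrals to integrals over I
  have hIooC : ∀ f : ℝ → ℂ, (∫ t in (-a)..a, f t) = ∫ t, f t ∂μ := by
    intro f
    rw [intervalIntegral.integral_of_le (by linarith), hμdef, hIdef,
      ← integral_Ioc_eq_integral_Ioo]
  have hIooR : ∀ f : ℝ → ℝ, (∫ t in (-a)..a, f t) = ∫ t, f t ∂μ := by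
    intro f
    rw [intervalIntegral.integral_of_le (by linarith), hμdef, hIdef,
      ← integral_Ioc_eq_integral_Ioo]
  -- main computation
  have hmain : (∫ t in (-a)..a, Lx t * starRingEnd ℂ (x t))
      = (((∫ t, h t ∂μ) + (∫ t, k t ∂μ) : ℝ) : ℂ) := by
    rw [hIooC]
    have hLxg : ∫ t, Lx t * starRingEnd ℂ (x t) ∂μ = ∫ t, (-(g t) + B t) ∂μ := by
      rw [hμdef]
      refine setIntegral_congr_fun measurableSet_Ioo fun t ht => ?_
      rw [hgdef, hBdef, hLx t ht]; ring
    have hsplit := integral_add hgI.neg hBI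
    try simp only [Pi.neg_apply] at hsplit
    rw [hLxg, hsplit, integral_neg, hgval]
    have hBk : ∫ t, B t ∂μ = ((∫ t, k t ∂μ : ℝ) : ℂ) := by
      have hco : ∫ t, ((k t : ℝ) : ℂ) ∂μ = ((∫ t, k t ∂μ : ℝ) : ℂ) := integral_ofReal
      rw [← hco]
      exact integral_congr_ae (by filter_upwards with t using hBco t)
    rw [hBk]
    push_cast
    ring
  have heq : (∫ t in (-a)..a, Lx t * starRingEnd ℂ (x t)) =
      ((∫ t in (-a)..a, (1 - t^2/a^2) * ‖x' t‖^2) +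
        ∫ t in (-a)..a, t^2 * ‖x t‖^2 : ℝ) := by
    rw [hmain, hIooR (fun t => (1 - t^2/a^2) * ‖x' t‖^2), hIooR (fun t => t^2 * ‖x t‖^2)]
  refine ⟨heq, ?_⟩
  rw [heq, Complex.ofReal_re]
  have h1 : 0 ≤ ∫ t, h t ∂μ := integral_nonneg_of_ae hhnn
  have h2 : 0 ≤ ∫ t, k t ∂μ := by
    refine integral_nonneg_of_ae ?_
    filter_upwards with t
    rw [hkdef]; positivity
  rw [hIooR (fun t => (1 - t^2/a^2) * ‖x' t‖^2), hIooR (fun t => t^2 * ‖x t‖^2)]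
  exact add_nonneg h1 h2
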